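/- Let a ≠ 0 and m₅ be real constants and set m₁ := −1/(64a⁴), m₂ := −5/(16a²), m₃ := −2m₅, m₄ := −16a²m₅. Then the compacton-type function u(t,x) := cos⁴(a(x − t)) satisfies u_t + m₁ u_{xxxxx} + m₂ u_{xxx} + m₃ u u_{xxx} + m₄ u u_x + m₅ u_x u_{xx} = 0 at every point (t,x). -/

import Mathlib

/-- Partial derivative of `u(t,x)` with respect to `t`. -/
noncomputable def pdt (u : ℝ × ℝ → ℝ) (t x : ℝ) : ℝ :=
  deriv (fun s => u (s, x)) t

/-- `n`-th partial derivative of `u(t,x)` with respect to `x`. -/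
noncomputable def pdx (n : ℕ) (u : ℝ × ℝ → ℝ) (t x : ℝ) : ℝ :=
  iteratedDeriv n (fun y => u (t, y)) x

/-- The compacton-type solution `u = cos⁴(a(x − t))` of the constant-coefficient
fifth-order KdV equation (17). -/
theorem compacton_solution
    (a m₅ : ℝ) (ha : a ≠ 0)
    (m₁ m₂ m₃ m₄ : ℝ)
    (hm₁ : m₁ = -1 / (64 * a ^ 4))
    (hm₂ : m₂ = -5 / (16 * a ^ 2))
    (hm₃ : m₃ = -2 * m₅)
    (hm₄ : m₄ = -16 * a ^ 2 * m₅)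
    (u : ℝ × ℝ → ℝ)
    (hu : ∀ p : ℝ × ℝ, u p = Real.cos (a * (p.2 - p.1)) ^ 4) :
    ∀ t x,
      pdt u t x + m₁ * pdx 5 u t x + m₂ * pdx 3 u t x
        + m₃ * u (t, x) * pdx 3 u t x + m₄ * u (t, x) * pdx 1 u t x
        + m₅ * pdx 1 u t x * pdx 2 u t x = 0 := by
  intro t x
  have hux : (fun y => u (t, y)) = fun y => Real.cos (a * (y - t)) ^ 4 :=
    funext fun y => hu (t, y)
  have hut : (fun s => u (s, x)) = fun s => Real.cos (a * (x - s)) ^ 4 :=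
    funext fun s => hu (s, x)
  have hid : ∀ y : ℝ, HasDerivAt (fun z : ℝ => a * (z - t)) a y := fun y => by
    simpa using ((hasDerivAt_id y).sub_const t).const_mul a
  have hcos : ∀ y, HasDerivAt (fun z => Real.cos (a * (z - t)))
      (-Real.sin (a * (y - t)) * a) y :=
    fun y => (Real.hasDerivAt_cos _).comp y (hid y)
  have hsin : ∀ y, HasDerivAt (fun z => Real.sin (a * (z - t)))
      (Real.cos (a * (y - t)) * a) y :=
    fun y => (Real.hasDerivAt_sin _).comp y (hid y)
  -- derivative chain
  have h0 : ∀ y, HasDerivAt (fun z => Real.cos (a * (z - t)) ^ 4)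
      (-4 * a * Real.cos (a * (y - t)) ^ 3 * Real.sin (a * (y - t))) y := fun y => by
    have H := (hcos y).fun_pow 4
    have e : (fun z => Real.cos (a * (z - t)) ^ 4) = fun z => Real.cos (a * (z - t)) ^ 4 := rfl
    refine H.congr_deriv ?_
    push_cast; ring
  have h1 : ∀ y, HasDerivAt
      (fun z => -4 * a * Real.cos (a * (z - t)) ^ 3 * Real.sin (a * (z - t)))
      (-4 * a ^ 2 * Real.cos (a * (y - t)) ^ 4
        + 12 * a ^ 2 * Real.cos (a * (y - t)) ^ 2 * Real.sin (a * (y - t)) ^ 2) y := fun y => by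
    have H := ((((hcos y).fun_pow 3).mul (hsin y)).const_mul (-4 * a))
    have e : (fun z => -4 * a * Real.cos (a * (z - t)) ^ 3 * Real.sin (a * (z - t)))
        = fun z => -4 * a * (Real.cos (a * (z - t)) ^ 3 * Real.sin (a * (z - t))) := by
      funext z; ring
    rw [e]
    refine H.congr_deriv ?_
    push_cast; ring
  have h2 : ∀ y, HasDerivAt
      (fun z => -4 * a ^ 2 * Real.cos (a * (z - t)) ^ 4
        + 12 * a ^ 2 * Real.cos (a * (z - t)) ^ 2 * Real.sin (a * (z - t)) ^ 2)
      (40 * a ^ 3 * Real.cos (a * (y - t)) ^ 3 * Real.sin (a * (y - t))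
        - 24 * a ^ 3 * Real.cos (a * (y - t)) * Real.sin (a * (y - t)) ^ 3) y := fun y => by
    have H := (((hcos y).fun_pow 4).const_mul (-4 * a ^ 2)).add
      ((((hcos y).fun_pow 2).mul ((hsin y).fun_pow 2)).const_mul (12 * a ^ 2))
    have e : (fun z => -4 * a ^ 2 * Real.cos (a * (z - t)) ^ 4
        + 12 * a ^ 2 * Real.cos (a * (z - t)) ^ 2 * Real.sin (a * (z - t)) ^ 2)
        = fun z => -4 * a ^ 2 * Real.cos (a * (z - t)) ^ 4
        + 12 * a ^ 2 * (Real.cos (a * (z - t)) ^ 2 * Real.sin (a * (z - t)) ^ 2) := by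
      funext z; ring
    rw [e]
    refine H.congr_deriv ?_
    push_cast; ring
  have h3 : ∀ y, HasDerivAt
      (fun z => 40 * a ^ 3 * Real.cos (a * (z - t)) ^ 3 * Real.sin (a * (z - t))
        - 24 * a ^ 3 * Real.cos (a * (z - t)) * Real.sin (a * (z - t)) ^ 3)
      (40 * a ^ 4 * Real.cos (a * (y - t)) ^ 4
        - 192 * a ^ 4 * Real.cos (a * (y - t)) ^ 2 * Real.sin (a * (y - t)) ^ 2
        + 24 * a ^ 4 * Real.sin (a * (y - t)) ^ 4) y := fun y => by
    have H := ((((hcos y).fun_pow 3).mul (hsin y)).const_mul (40 * a ^ 3)).sub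
      (((hcos y).mul ((hsin y).fun_pow 3)).const_mul (24 * a ^ 3))
    have e : (fun z => 40 * a ^ 3 * Real.cos (a * (z - t)) ^ 3 * Real.sin (a * (z - t))
        - 24 * a ^ 3 * Real.cos (a * (z - t)) * Real.sin (a * (z - t)) ^ 3)
        = fun z => 40 * a ^ 3 * (Real.cos (a * (z - t)) ^ 3 * Real.sin (a * (z - t)))
        - 24 * a ^ 3 * (Real.cos (a * (z - t)) * Real.sin (a * (z - t)) ^ 3) := by
      funext z; ring
    rw [e]
    refine H.congr_deriv ?_
    push_cast; ring
  have h4 : ∀ y, HasDerivAt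
      (fun z => 40 * a ^ 4 * Real.cos (a * (z - t)) ^ 4
        - 192 * a ^ 4 * Real.cos (a * (z - t)) ^ 2 * Real.sin (a * (z - t)) ^ 2
        + 24 * a ^ 4 * Real.sin (a * (z - t)) ^ 4)
      (-544 * a ^ 5 * Real.cos (a * (y - t)) ^ 3 * Real.sin (a * (y - t))
        + 480 * a ^ 5 * Real.cos (a * (y - t)) * Real.sin (a * (y - t)) ^ 3) y := fun y => by
    have H := ((((hcos y).fun_pow 4).const_mul (40 * a ^ 4)).sub
      ((((hcos y).fun_pow 2).mul ((hsin y).fun_pow 2)).const_mul (192 * a ^ 4))).add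
      (((hsin y).fun_pow 4).const_mul (24 * a ^ 4))
    have e : (fun z => 40 * a ^ 4 * Real.cos (a * (z - t)) ^ 4
        - 192 * a ^ 4 * Real.cos (a * (z - t)) ^ 2 * Real.sin (a * (z - t)) ^ 2
        + 24 * a ^ 4 * Real.sin (a * (z - t)) ^ 4)
        = fun z => 40 * a ^ 4 * Real.cos (a * (z - t)) ^ 4
        - 192 * a ^ 4 * (Real.cos (a * (z - t)) ^ 2 * Real.sin (a * (z - t)) ^ 2)
        + 24 * a ^ 4 * Real.sin (a * (z - t)) ^ 4 := by
      funext z; ring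
    rw [e]
    refine H.congr_deriv ?_
    push_cast; ring
  -- function-level derivative identities
  have D0 : deriv (fun z => Real.cos (a * (z - t)) ^ 4)
      = fun y => -4 * a * Real.cos (a * (y - t)) ^ 3 * Real.sin (a * (y - t)) :=
    funext fun y => (h0 y).deriv
  have D1 : deriv (fun z => -4 * a * Real.cos (a * (z - t)) ^ 3 * Real.sin (a * (z - t)))
      = fun y => -4 * a ^ 2 * Real.cos (a * (y - t)) ^ 4
        + 12 * a ^ 2 * Real.cos (a * (y - t)) ^ 2 * Real.sin (a * (y - t)) ^ 2 :=
    funext fun y => (h1 y).deriv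
  have D2 : deriv (fun z => -4 * a ^ 2 * Real.cos (a * (z - t)) ^ 4
        + 12 * a ^ 2 * Real.cos (a * (z - t)) ^ 2 * Real.sin (a * (z - t)) ^ 2)
      = fun y => 40 * a ^ 3 * Real.cos (a * (y - t)) ^ 3 * Real.sin (a * (y - t))
        - 24 * a ^ 3 * Real.cos (a * (y - t)) * Real.sin (a * (y - t)) ^ 3 :=
    funext fun y => (h2 y).deriv
  have D3 : deriv (fun z => 40 * a ^ 3 * Real.cos (a * (z - t)) ^ 3 * Real.sin (a * (z - t))
        - 24 * a ^ 3 * Real.cos (a * (z - t)) * Real.sin (a * (z - t)) ^ 3)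
      = fun y => 40 * a ^ 4 * Real.cos (a * (y - t)) ^ 4
        - 192 * a ^ 4 * Real.cos (a * (y - t)) ^ 2 * Real.sin (a * (y - t)) ^ 2
        + 24 * a ^ 4 * Real.sin (a * (y - t)) ^ 4 :=
    funext fun y => (h3 y).deriv
  have D4 : deriv (fun z => 40 * a ^ 4 * Real.cos (a * (z - t)) ^ 4
        - 192 * a ^ 4 * Real.cos (a * (z - t)) ^ 2 * Real.sin (a * (z - t)) ^ 2
        + 24 * a ^ 4 * Real.sin (a * (z - t)) ^ 4)
      = fun y => -544 * a ^ 5 * Real.cos (a * (y - t)) ^ 3 * Real.sin (a * (y - t))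
        + 480 * a ^ 5 * Real.cos (a * (y - t)) * Real.sin (a * (y - t)) ^ 3 :=
    funext fun y => (h4 y).deriv
  -- iterated derivatives
  have I1 : iteratedDeriv 1 (fun z => Real.cos (a * (z - t)) ^ 4)
      = fun y => -4 * a * Real.cos (a * (y - t)) ^ 3 * Real.sin (a * (y - t)) := by
    rw [iteratedDeriv_one, D0]
  have I2 : iteratedDeriv 2 (fun z => Real.cos (a * (z - t)) ^ 4)
      = fun y => -4 * a ^ 2 * Real.cos (a * (y - t)) ^ 4
        + 12 * a ^ 2 * Real.cos (a * (y - t)) ^ 2 * Real.sin (a * (y - t)) ^ 2 := by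
    rw [iteratedDeriv_succ, I1, D1]
  have I3 : iteratedDeriv 3 (fun z => Real.cos (a * (z - t)) ^ 4)
      = fun y => 40 * a ^ 3 * Real.cos (a * (y - t)) ^ 3 * Real.sin (a * (y - t))
        - 24 * a ^ 3 * Real.cos (a * (y - t)) * Real.sin (a * (y - t)) ^ 3 := by
    rw [iteratedDeriv_succ, I2, D2]
  have I4 : iteratedDeriv 4 (fun z => Real.cos (a * (z - t)) ^ 4)
      = fun y => 40 * a ^ 4 * Real.cos (a * (y - t)) ^ 4
        - 192 * a ^ 4 * Real.cos (a * (y - t)) ^ 2 * Real.sin (a * (y - t)) ^ 2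
        + 24 * a ^ 4 * Real.sin (a * (y - t)) ^ 4 := by
    rw [iteratedDeriv_succ, I3, D3]
  have I5 : iteratedDeriv 5 (fun z => Real.cos (a * (z - t)) ^ 4)
      = fun y => -544 * a ^ 5 * Real.cos (a * (y - t)) ^ 3 * Real.sin (a * (y - t))
        + 480 * a ^ 5 * Real.cos (a * (y - t)) * Real.sin (a * (y - t)) ^ 3 := by
    rw [iteratedDeriv_succ, I4, D4]
  -- time derivative
  have ht : HasDerivAt (fun s => Real.cos (a * (x - s)) ^ 4)
      (4 * a * Real.cos (a * (x - t)) ^ 3 * Real.sin (a * (x - t))) t := by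
    have hin : HasDerivAt (fun s : ℝ => a * (x - s)) (-a) t := by
      simpa using ((hasDerivAt_id t).const_sub x).const_mul a
    have H := ((Real.hasDerivAt_cos (a * (x - t))).comp t hin).fun_pow 4
    simp only [Function.comp] at H
    refine H.congr_deriv ?_
    push_cast; ring
  have ept : pdt u t x = 4 * a * Real.cos (a * (x - t)) ^ 3 * Real.sin (a * (x - t)) := by
    rw [pdt, hut]; exact ht.deriv
  rw [ept, pdx, pdx, pdx, pdx, hux, hu (t, x), I1, I2, I3, I5]
  simp only
  rw [hm₁, hm₂, hm₃, hm₄]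
  have h4 : a ^ 4 ≠ 0 := pow_ne_zero 4 ha
  have h2 : a ^ 2 ≠ 0 := pow_ne_zero 2 ha
  field_simp
  ring
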